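/- Let a, b, c be real numbers with b ≠ 0, and let a₀, a₁ : ℝ → ℝ be twice continuously differentiable. Define φ(x̄) = (x̄ − c(1 + a·x̄))/(b(1 + a·x̄)), t(x̄) = 1 + a·x̄, ā₁(x̄) = a₁(φ(x̄))/(b³ t(x̄)⁶), and ā₀(x̄) = a₀(φ(x̄))/(b⁴ t(x̄)⁸) − 3a·a₁(φ(x̄))/(b³ t(x̄)⁷) on {x̄ : t(x̄) ≠ 0}. Then for every x̄ with t(x̄) ≠ 0 and a₁(φ(x̄)) ≠ 0, one has (16ā₀(x̄)³ + 48ā₀(x̄)²ā₁′(x̄) + 9ā₁(x̄)²ā₀″(x̄) − 9ā₀(x̄)ā₁(x̄)(6ā₀′(x̄) + ā₁″(x̄)))/(9ā₁(x̄)⁴) = (16a₀³ + 48a₀²a₁′ + 9a₁²a₀″ − 9a₀a₁(6a₀′ + a₁″))/(9a₁⁴) evaluated at φ(x̄). -/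

import Mathlib

/-- The point transformation of the independent variable:
`φ(x̄) = (x̄ − c(1 + a x̄)) / (b(1 + a x̄))`. -/
noncomputable def phi (a b c : ℝ) (x : ℝ) : ℝ :=
  (x - c * (1 + a * x)) / (b * (1 + a * x))

/-- The transformed coefficient `ā₁(x̄) = a₁(φ(x̄)) / (b³ (1 + a x̄)⁶)`
for the canonical form `y⁽⁴⁾ + a₁ y′ + a₀ y = 0`. -/
noncomputable def abar1 (a b c : ℝ) (a1 : ℝ → ℝ) (x : ℝ) : ℝ :=
  a1 (phi a b c x) / (b ^ 3 * (1 + a * x) ^ 6)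

/-- The transformed coefficient
`ā₀(x̄) = a₀(φ(x̄))/(b⁴ (1+a x̄)⁸) − 3a a₁(φ(x̄))/(b³ (1+a x̄)⁷)`
for the canonical form `y⁽⁴⁾ + a₁ y′ + a₀ y = 0`. -/
noncomputable def abar0 (a b c : ℝ) (a0 a1 : ℝ → ℝ) (x : ℝ) : ℝ :=
  a0 (phi a b c x) / (b ^ 4 * (1 + a * x) ^ 8)
    - 3 * a * a1 (phi a b c x) / (b ^ 3 * (1 + a * x) ^ 7)

lemma hasDerivAt_one_add (a x : ℝ) : HasDerivAt (fun x : ℝ => 1 + a * x) a x := by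
  simpa using ((hasDerivAt_id x).const_mul a).const_add 1

lemma hasDerivAt_phi (a b c : ℝ) (hb : b ≠ 0) {x : ℝ} (ht : 1 + a * x ≠ 0) :
    HasDerivAt (phi a b c) (1 / (b * (1 + a * x) ^ 2)) x := by
  have h1 := hasDerivAt_one_add a x
  have hnum : HasDerivAt (fun x : ℝ => x - c * (1 + a * x)) (1 - c * a) x :=
    (hasDerivAt_id x).sub (h1.const_mul c)
  have hden : HasDerivAt (fun x : ℝ => b * (1 + a * x)) (b * a) x := h1.const_mul b
  have h : HasDerivAt (phi a b c) _ x := hnum.div hden (mul_ne_zero hb ht)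
  convert h using 1
  field_simp
  ring

/-- Key derivative lemma for `f(φ(x)) / (b^k (1+ax)^(n+1))`. -/
lemma hasDerivAt_key (a b c : ℝ) (hb : b ≠ 0) (f : ℝ → ℝ) {x : ℝ} (ht : 1 + a * x ≠ 0)
    (hf : DifferentiableAt ℝ f (phi a b c x)) (k n : ℕ) :
    HasDerivAt (fun x => f (phi a b c x) / (b ^ k * (1 + a * x) ^ (n + 1)))
      (deriv f (phi a b c x) / (b ^ (k + 1) * (1 + a * x) ^ (n + 3))
        - ((n : ℝ) + 1) * a * (f (phi a b c x) / (b ^ k * (1 + a * x) ^ (n + 2)))) x := by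
  have hphi := hasDerivAt_phi a b c hb ht
  have hcomp : HasDerivAt (fun x => f (phi a b c x))
      (deriv f (phi a b c x) * (1 / (b * (1 + a * x) ^ 2))) x :=
    (hf.hasDerivAt).comp x hphi
  have h1 := hasDerivAt_one_add a x
  have hden : HasDerivAt (fun x : ℝ => b ^ k * (1 + a * x) ^ (n + 1))
      (b ^ k * (((n : ℝ) + 1) * (1 + a * x) ^ n * a)) x := by
    have := (h1.pow (n + 1)).const_mul (b ^ k)
    simpa using this
  have hne : b ^ k * (1 + a * x) ^ (n + 1) ≠ 0 :=
    mul_ne_zero (pow_ne_zero _ hb) (pow_ne_zero _ ht)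
  have h : HasDerivAt (fun x => f (phi a b c x) / (b ^ k * (1 + a * x) ^ (n + 1))) _ x :=
    hcomp.div hden hne
  convert h using 1
  have hbk : (b : ℝ) ^ k ≠ 0 := pow_ne_zero _ hb
  have htn : ∀ m : ℕ, (1 + a * x) ^ m ≠ 0 := fun m => pow_ne_zero _ ht
  field_simp
  ring

set_option maxHeartbeats 2000000 in
/-- The core algebraic identity behind the invariance of `Ψ₄^{2,4}`. -/
lemma psi_alg (a b T A0 A1 B0 B1 C0 C1 : ℝ) (hb : b ≠ 0) (hT : T ≠ 0)
    (hA1 : A1 ≠ 0) :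
    (16 * (A0 / (b ^ 4 * T ^ 8) - 3 * a * A1 / (b ^ 3 * T ^ 7)) ^ 3
      + 48 * (A0 / (b ^ 4 * T ^ 8) - 3 * a * A1 / (b ^ 3 * T ^ 7)) ^ 2
          * (B1 / (b ^ 4 * T ^ 8) - 6 * a * (A1 / (b ^ 3 * T ^ 7)))
      + 9 * (A1 / (b ^ 3 * T ^ 6)) ^ 2
          * (C0 / (b ^ 6 * T ^ 12) - 18 * a * (B0 / (b ^ 5 * T ^ 11))
             + 72 * a ^ 2 * (A0 / (b ^ 4 * T ^ 10))
             - 3 * a * (C1 / (b ^ 5 * T ^ 11))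
             + 48 * a ^ 2 * (B1 / (b ^ 4 * T ^ 10))
             - 168 * a ^ 3 * (A1 / (b ^ 3 * T ^ 9)))
      - 9 * (A0 / (b ^ 4 * T ^ 8) - 3 * a * A1 / (b ^ 3 * T ^ 7))
          * (A1 / (b ^ 3 * T ^ 6))
          * (6 * ((B0 / (b ^ 5 * T ^ 10) - 8 * a * (A0 / (b ^ 4 * T ^ 9)))
                  - 3 * a * (B1 / (b ^ 4 * T ^ 9) - 7 * a * (A1 / (b ^ 3 * T ^ 8))))
             + (C1 / (b ^ 5 * T ^ 10) - 14 * a * (B1 / (b ^ 4 * T ^ 9))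
                + 42 * a ^ 2 * (A1 / (b ^ 3 * T ^ 8)))))
      / (9 * (A1 / (b ^ 3 * T ^ 6)) ^ 4)
    = (16 * A0 ^ 3 + 48 * A0 ^ 2 * B1 + 9 * A1 ^ 2 * C0
        - 9 * A0 * A1 * (6 * B0 + C1)) / (9 * A1 ^ 4) := by
  field_simp
  ring

/-- the invariant
`Ψ₄^{2,4} = (16a₀³ + 48a₀²a₁′ + 9a₁²a₀″ − 9a₀a₁(6a₀′ + a₁″))/(9a₁⁴)` of the
canonical form `y⁽⁴⁾ + a₁ y′ + a₀ y = 0` is an absolute invariant of the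
structure invariance group. -/
theorem stmt_16 (a b c : ℝ) (hb : b ≠ 0) (a0 a1 : ℝ → ℝ)
    (ha0 : ContDiff ℝ 2 a0) (ha1 : ContDiff ℝ 2 a1) :
    ∀ xb : ℝ, 1 + a * xb ≠ 0 → a1 (phi a b c xb) ≠ 0 →
      (16 * (abar0 a b c a0 a1 xb) ^ 3
          + 48 * (abar0 a b c a0 a1 xb) ^ 2 * deriv (abar1 a b c a1) xb
          + 9 * (abar1 a b c a1 xb) ^ 2 * iteratedDeriv 2 (abar0 a b c a0 a1) xb
          - 9 * abar0 a b c a0 a1 xb * abar1 a b c a1 xb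
              * (6 * deriv (abar0 a b c a0 a1) xb
                  + iteratedDeriv 2 (abar1 a b c a1) xb))
        / (9 * (abar1 a b c a1 xb) ^ 4)
      = (16 * (a0 (phi a b c xb)) ^ 3
          + 48 * (a0 (phi a b c xb)) ^ 2 * deriv a1 (phi a b c xb)
          + 9 * (a1 (phi a b c xb)) ^ 2 * iteratedDeriv 2 a0 (phi a b c xb)
          - 9 * a0 (phi a b c xb) * a1 (phi a b c xb)
              * (6 * deriv a0 (phi a b c xb)
                  + iteratedDeriv 2 a1 (phi a b c xb)))
        / (9 * (a1 (phi a b c xb)) ^ 4) := by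
  intro xb ht hA1
  -- differentiability facts
  have hd0 : Differentiable ℝ a0 := ha0.differentiable (by norm_num)
  have hd1 : Differentiable ℝ a1 := ha1.differentiable (by norm_num)
  have hd0' : Differentiable ℝ (deriv a0) := by
    have h := ContDiff.iterate_deriv' 1 1 (f := a0) (by exact_mod_cast ha0)
    simpa using h.differentiable (by norm_num)
  have hd1' : Differentiable ℝ (deriv a1) := by
    have h := ContDiff.iterate_deriv' 1 1 (f := a1) (by exact_mod_cast ha1)
    simpa using h.differentiable (by norm_num)
  -- the open set where the transformation is defined
  have hS : IsOpen {x : ℝ | 1 + a * x ≠ 0} := by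
    have : Continuous fun x : ℝ => 1 + a * x := by continuity
    exact isOpen_compl_singleton.preimage this
  have hmem : {x : ℝ | 1 + a * x ≠ 0} ∈ nhds xb := hS.mem_nhds ht
  -- first derivative of abar1 as a function formula
  have key1 : ∀ x : ℝ, 1 + a * x ≠ 0 →
      HasDerivAt (abar1 a b c a1)
        (deriv a1 (phi a b c x) / (b ^ 4 * (1 + a * x) ^ 8)
          - 6 * a * (a1 (phi a b c x) / (b ^ 3 * (1 + a * x) ^ 7))) x := by
    intro x hx
    have h := hasDerivAt_key a b c hb a1 hx (hd1 _) 3 5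
    norm_num at h
    exact h
  -- first derivative of abar0
  have key0 : ∀ x : ℝ, 1 + a * x ≠ 0 →
      HasDerivAt (abar0 a b c a0 a1)
        ((deriv a0 (phi a b c x) / (b ^ 5 * (1 + a * x) ^ 10)
            - 8 * a * (a0 (phi a b c x) / (b ^ 4 * (1 + a * x) ^ 9)))
          - 3 * a * (deriv a1 (phi a b c x) / (b ^ 4 * (1 + a * x) ^ 9)
            - 7 * a * (a1 (phi a b c x) / (b ^ 3 * (1 + a * x) ^ 8)))) x := by
    intro x hx
    have h0 := hasDerivAt_key a b c hb a0 hx (hd0 _) 4 7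
    have h1 := hasDerivAt_key a b c hb a1 hx (hd1 _) 3 6
    norm_num at h0 h1
    have h := h0.sub (h1.const_mul (3 * a))
    simp only [Pi.sub_def] at h
    have heq : abar0 a b c a0 a1 = fun x =>
        a0 (phi a b c x) / (b ^ 4 * (1 + a * x) ^ 8)
          - 3 * a * (a1 (phi a b c x) / (b ^ 3 * (1 + a * x) ^ 7)) := by
      funext y; simp [abar0, mul_div_assoc]
    rw [heq]
    convert h using 1
  have hD1 : deriv (abar1 a b c a1) xb =
      deriv a1 (phi a b c xb) / (b ^ 4 * (1 + a * xb) ^ 8)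
        - 6 * a * (a1 (phi a b c xb) / (b ^ 3 * (1 + a * xb) ^ 7)) :=
    (key1 xb ht).deriv
  have hD0 : deriv (abar0 a b c a0 a1) xb =
      (deriv a0 (phi a b c xb) / (b ^ 5 * (1 + a * xb) ^ 10)
          - 8 * a * (a0 (phi a b c xb) / (b ^ 4 * (1 + a * xb) ^ 9)))
        - 3 * a * (deriv a1 (phi a b c xb) / (b ^ 4 * (1 + a * xb) ^ 9)
          - 7 * a * (a1 (phi a b c xb) / (b ^ 3 * (1 + a * xb) ^ 8))) :=
    (key0 xb ht).deriv
  -- second derivatives via eventual equality of the first derivative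
  have heq1 : deriv (abar1 a b c a1) =ᶠ[nhds xb] fun x =>
      deriv a1 (phi a b c x) / (b ^ 4 * (1 + a * x) ^ 8)
        - 6 * a * (a1 (phi a b c x) / (b ^ 3 * (1 + a * x) ^ 7)) :=
    Filter.eventuallyEq_of_mem hmem fun x hx => (key1 x hx).deriv
  have heq0 : deriv (abar0 a b c a0 a1) =ᶠ[nhds xb] fun x =>
      (deriv a0 (phi a b c x) / (b ^ 5 * (1 + a * x) ^ 10)
          - 8 * a * (a0 (phi a b c x) / (b ^ 4 * (1 + a * x) ^ 9)))
        - 3 * a * (deriv a1 (phi a b c x) / (b ^ 4 * (1 + a * x) ^ 9)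
          - 7 * a * (a1 (phi a b c x) / (b ^ 3 * (1 + a * x) ^ 8))) :=
    Filter.eventuallyEq_of_mem hmem fun x hx => (key0 x hx).deriv
  have hDD1 : iteratedDeriv 2 (abar1 a b c a1) xb =
      deriv (deriv a1) (phi a b c xb) / (b ^ 5 * (1 + a * xb) ^ 10)
        - 14 * a * (deriv a1 (phi a b c xb) / (b ^ 4 * (1 + a * xb) ^ 9))
        + 42 * a ^ 2 * (a1 (phi a b c xb) / (b ^ 3 * (1 + a * xb) ^ 8)) := by
    have h1 := hasDerivAt_key a b c hb (deriv a1) ht (hd1' _) 4 7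
    have h2 := hasDerivAt_key a b c hb a1 ht (hd1 _) 3 6
    norm_num at h1 h2
    have h := h1.sub (h2.const_mul (6 * a))
    simp only [Pi.sub_def] at h
    rw [iteratedDeriv_succ, iteratedDeriv_one, heq1.deriv_eq]
    rw [h.deriv]
    ring
  have hDD0 : iteratedDeriv 2 (abar0 a b c a0 a1) xb =
      deriv (deriv a0) (phi a b c xb) / (b ^ 6 * (1 + a * xb) ^ 12)
        - 18 * a * (deriv a0 (phi a b c xb) / (b ^ 5 * (1 + a * xb) ^ 11))
        + 72 * a ^ 2 * (a0 (phi a b c xb) / (b ^ 4 * (1 + a * xb) ^ 10))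
        - 3 * a * (deriv (deriv a1) (phi a b c xb) / (b ^ 5 * (1 + a * xb) ^ 11))
        + 48 * a ^ 2 * (deriv a1 (phi a b c xb) / (b ^ 4 * (1 + a * xb) ^ 10))
        - 168 * a ^ 3 * (a1 (phi a b c xb) / (b ^ 3 * (1 + a * xb) ^ 9)) := by
    have h1 := hasDerivAt_key a b c hb (deriv a0) ht (hd0' _) 5 9
    have h2 := hasDerivAt_key a b c hb a0 ht (hd0 _) 4 8
    have h3 := hasDerivAt_key a b c hb (deriv a1) ht (hd1' _) 4 8
    have h4 := hasDerivAt_key a b c hb a1 ht (hd1 _) 3 7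
    norm_num at h1 h2 h3 h4
    have h := ((h1.sub (h2.const_mul (8 * a))).sub
      ((h3.sub (h4.const_mul (7 * a))).const_mul (3 * a)))
    simp only [Pi.sub_def, Pi.sub_apply] at h
    rw [iteratedDeriv_succ, iteratedDeriv_one, heq0.deriv_eq]
    rw [h.deriv]
    ring
  have hida0 : iteratedDeriv 2 a0 (phi a b c xb) = deriv (deriv a0) (phi a b c xb) := by
    rw [iteratedDeriv_succ, iteratedDeriv_one]
  have hida1 : iteratedDeriv 2 a1 (phi a b c xb) = deriv (deriv a1) (phi a b c xb) := by
    rw [iteratedDeriv_succ, iteratedDeriv_one]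
  have hab1 : abar1 a b c a1 xb = a1 (phi a b c xb) / (b ^ 3 * (1 + a * xb) ^ 6) := rfl
  have hab0 : abar0 a b c a0 a1 xb = a0 (phi a b c xb) / (b ^ 4 * (1 + a * xb) ^ 8)
      - 3 * a * a1 (phi a b c xb) / (b ^ 3 * (1 + a * xb) ^ 7) := rfl
  rw [hD1, hD0, hDD1, hDD0, hida0, hida1, hab1, hab0]
  exact psi_alg a b (1 + a * xb) (a0 (phi a b c xb)) (a1 (phi a b c xb))
    (deriv a0 (phi a b c xb)) (deriv a1 (phi a b c xb))
    (deriv (deriv a0) (phi a b c xb)) (deriv (deriv a1) (phi a b c xb)) hb ht hA1
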